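/- arXiv:2605.31507 — 4 statements merged into one kernel-verified Lean document; each statement's English description precedes it below -/
import Mathlib

section
/- Let d ≥ 2 and suppose there exist f in C^d, f ≠ 0, and integers m > (d-1)/3 such that both f and f̂ each have at least 2m zeros, with the zeros of f including m consecutive positions (i.e., supp(f) ⊆ {0,...,d-m-1} after a cyclic shift). Then a contradiction arises: no nonzero f in C^d can satisfy supp(f) ⊆ {0,...,d-m-1} and |{l : f̂_l = 0}| ≥ 2m when m > (d-1)/3. -/
open Complex Finset

noncomputable def chi (d : ℕ) (a : ZMod d) : ℂ :=
  Complex.exp (-(2 * (Real.pi : ℂ) * Complex.I * (a.val : ℂ)) / (d : ℂ))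

noncomputable def stft (d : ℕ) [NeZero d] (g f : ZMod d → ℂ) (k l : ZMod d) : ℂ :=
  ∑ j : ZMod d, f j * (starRingEnd ℂ) (g (j - k)) * chi d (j * l)

noncomputable def dft (d : ℕ) [NeZero d] (f : ZMod d → ℂ) (l : ZMod d) : ℂ :=
  ∑ j : ZMod d, f j * chi d (j * l)

noncomputable def ft2 (d : ℕ) [NeZero d] (F : ZMod d → ZMod d → ℂ) (a b : ZMod d) : ℂ :=
  ∑ k : ZMod d, ∑ l : ZMod d, F k l * chi d (a * k + b * l)

noncomputable def zeta (d : ℕ) : ℂ := Complex.exp (-(2 * (Real.pi : ℂ) * Complex.I) / d)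

lemma zeta_prim (d : ℕ) [NeZero d] : IsPrimitiveRoot (zeta d) d := by
  have h := Complex.isPrimitiveRoot_exp d (NeZero.ne d)
  have h2 := h.inv
  have : (Complex.exp (2 * Real.pi * Complex.I / d))⁻¹ = zeta d := by
    rw [← Complex.exp_neg]
    unfold zeta
    ring_nf
  rwa [this] at h2

lemma zeta_pow_d (d : ℕ) [NeZero d] : zeta d ^ d = 1 := (zeta_prim d).pow_eq_one

lemma chi_eq (d : ℕ) [NeZero d] (a : ZMod d) : chi d a = zeta d ^ a.val := by
  unfold chi zeta
  rw [← Complex.exp_nat_mul]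
  congr 1
  ring

lemma chi_mul_eq (d : ℕ) [NeZero d] (j l : ZMod d) :
    chi d (j * l) = zeta d ^ (j.val * l.val) := by
  rw [chi_eq, ZMod.val_mul]
  exact (pow_eq_pow_mod _ (zeta_pow_d d)).symm

theorem stmt5 (d m : ℕ) [NeZero d] (hd : 2 ≤ d) (hm : 3 * m > d - 1) :
    ¬ ∃ f : ZMod d → ℂ, f ≠ 0 ∧
      (∀ j : ZMod d, f j ≠ 0 → j.val ≤ d - m - 1) ∧
      2 * m ≤ {l : ZMod d | dft d f l = 0}.ncard := by
  rintro ⟨f, hf0, hsupp, hcard⟩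
  set P : Polynomial ℂ := ∑ j : ZMod d, Polynomial.C (f j) * Polynomial.X ^ j.val with hP
  -- P is nonzero
  obtain ⟨j0, hj0⟩ : ∃ j, f j ≠ 0 := by
    by_contra h
    push_neg at h
    exact hf0 (funext h)
  have hcoeff : P.coeff j0.val = f j0 := by
    rw [hP, Polynomial.finset_sum_coeff]
    rw [Finset.sum_eq_single j0]
    · simp
    · intro b _ hb
      have : b.val ≠ j0.val := fun h => hb (ZMod.val_injective d h)
      simp only [Polynomial.coeff_C_mul, Polynomial.coeff_X_pow]
      rw [if_neg (Ne.symm this), mul_zero]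
    · simp
  have hPne : P ≠ 0 := fun h => hj0 (by rw [← hcoeff, h, Polynomial.coeff_zero])
  -- degree bound
  have hdeg : P.natDegree ≤ d - m - 1 := by
    apply Polynomial.natDegree_sum_le_of_forall_le
    intro j _
    by_cases h : f j = 0
    · simp [h]
    · calc (Polynomial.C (f j) * Polynomial.X ^ j.val).natDegree
          ≤ j.val := by
            refine (Polynomial.natDegree_C_mul_le (f j) (Polynomial.X ^ j.val)).trans ?_
            simp
        _ ≤ d - m - 1 := hsupp j h
  -- dft as polynomial evaluation
  have heval : ∀ l : ZMod d, dft d f l = P.eval (zeta d ^ l.val) := by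
    intro l
    rw [hP, Polynomial.eval_finset_sum]
    unfold dft
    apply Finset.sum_congr rfl
    intro j _
    rw [chi_mul_eq]
    simp only [Polynomial.eval_mul, Polynomial.eval_C, Polynomial.eval_pow, Polynomial.eval_X,
      ← pow_mul]
    rw [mul_comm l.val j.val]
  -- zeros set as finset
  set T : Finset (ZMod d) := Finset.univ.filter (fun l => dft d f l = 0) with hT
  have hncard : {l : ZMod d | dft d f l = 0}.ncard = T.card := by
    rw [Set.ncard_eq_toFinset_card']
    congr 1
    ext l
    simp [hT]
  -- injection into roots
  have hprim := zeta_prim d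
  have hinj : Set.InjOn (fun l : ZMod d => zeta d ^ l.val) T := by
    intro a _ b _ hab
    exact ZMod.val_injective d (hprim.pow_inj (ZMod.val_lt a) (ZMod.val_lt b) hab)
  have hsub : T.image (fun l : ZMod d => zeta d ^ l.val) ⊆ P.roots.toFinset := by
    intro x hx
    simp only [Finset.mem_image] at hx
    obtain ⟨l, hl, rfl⟩ := hx
    rw [hT, Finset.mem_filter] at hl
    rw [Multiset.mem_toFinset, Polynomial.mem_roots hPne]
    rw [Polynomial.IsRoot.def, ← heval]
    exact hl.2
  have hTle : T.card ≤ d - m - 1 := by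
    calc T.card = (T.image (fun l : ZMod d => zeta d ^ l.val)).card :=
          (Finset.card_image_of_injOn hinj).symm
      _ ≤ P.roots.toFinset.card := Finset.card_le_card hsub
      _ ≤ Multiset.card P.roots := P.roots.toFinset_card_le
      _ ≤ P.natDegree := Polynomial.card_roots' P
      _ ≤ d - m - 1 := hdeg
  rw [hncard] at hcard
  omega
end

section
/- Let d be prime and f in C^d nonzero. Then |supp(f)| + |supp(f̂)| ≥ d + 1. -/
open Complex Finset

namespace TaoUP
open MvPolynomial

variable {n : ℕ}

noncomputable def subXX (i j : Fin n) : MvPolynomial (Fin n) ℤ →+* MvPolynomial (Fin n) ℤ :=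
  (MvPolynomial.aeval (fun k => if k = i then MvPolynomial.X j else MvPolynomial.X k)).toRingHom

@[simp] lemma subXX_X (i j k : Fin n) :
    subXX i j (X k) = if k = i then X j else X k := by
  simp [subXX]

lemma dvd_sub_subXX (i j : Fin n) (P : MvPolynomial (Fin n) ℤ) :
    (X i - X j : MvPolynomial (Fin n) ℤ) ∣ (P - subXX i j P) := by
  induction P using MvPolynomial.induction_on with
  | C r => simp [subXX]
  | add p q hp hq =>
      have : p + q - subXX i j (p + q) = (p - subXX i j p) + (q - subXX i j q) := by
        rw [map_add]; ring
      rw [this]; exact dvd_add hp hq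
  | mul_X p k hp =>
      have : p * X k - subXX i j (p * X k)
          = (p - subXX i j p) * X k + subXX i j p * (X k - subXX i j (X k)) := by
        rw [map_mul]; ring
      rw [this]
      refine dvd_add (Dvd.dvd.mul_right hp _) (Dvd.dvd.mul_left ?_ _)
      rcases eq_or_ne k i with rfl | hk
      · simp
      · simp [hk]

lemma subXX_eq_zero_of_dvd (i j : Fin n) {P : MvPolynomial (Fin n) ℤ}
    (h : (X i - X j : MvPolynomial (Fin n) ℤ) ∣ P) : subXX i j P = 0 := by
  obtain ⟨q, rfl⟩ := h
  rw [map_mul]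
  simp [subXX]

lemma dvd_of_subXX_eq_zero (i j : Fin n) {P : MvPolynomial (Fin n) ℤ}
    (h : subXX i j P = 0) : (X i - X j : MvPolynomial (Fin n) ℤ) ∣ P := by
  have := dvd_sub_subXX i j P
  rwa [h, sub_zero] at this

lemma prime_X_sub_X (i j : Fin n) (hij : i ≠ j) :
    Prime (X i - X j : MvPolynomial (Fin n) ℤ) := by
  constructor
  · intro hz
    have : MvPolynomial.eval (fun k => if k = i then (1:ℤ) else 0) (X i - X j) = 1 := by
      simp [hij.symm]
    rw [hz] at this
    simp at this
  constructor
  · intro h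
    have h0 : subXX i j (X i - X j) = 0 := subXX_eq_zero_of_dvd i j (dvd_refl _)
    exact (h.map (subXX i j)).ne_zero h0
  · intro a b hab
    have : subXX i j a * subXX i j b = 0 := by
      rw [← map_mul]; exact subXX_eq_zero_of_dvd i j hab
    rcases mul_eq_zero.1 this with h | h
    · exact Or.inl (dvd_of_subXX_eq_zero i j h)
    · exact Or.inr (dvd_of_subXX_eq_zero i j h)



lemma prod_dvd_of_primes {M : Type*} [CommMonoidWithZero M] [IsCancelMulZero M] {α : Type*}
    (s : Finset α) (g : α → M) :
    ∀ (N : M), (∀ a ∈ s, Prime (g a)) →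
    (∀ a ∈ s, ∀ b ∈ s, a ≠ b → ¬ g a ∣ g b) →
    (∀ a ∈ s, g a ∣ N) → (∏ a ∈ s, g a) ∣ N := by
  classical
  induction s using Finset.induction with
  | empty => simp
  | insert _ _ hx ih =>
      rename_i a s
      intro N hp hnd hd
      obtain ⟨m, rfl⟩ := hd a (mem_insert_self a s)
      rw [prod_insert hx]
      refine mul_dvd_mul_left _ (ih m (fun b hb => hp b (mem_insert_of_mem hb))
        (fun b hb c hc hbc => hnd b (mem_insert_of_mem hb) c (mem_insert_of_mem hc) hbc)
        (fun b hb => ?_))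
      have hbprime := hp b (mem_insert_of_mem hb)
      have hbdvd := hd b (mem_insert_of_mem hb)
      rcases hbprime.dvd_or_dvd hbdvd with h | h
      · exact absurd h (hnd b (mem_insert_of_mem hb) a (mem_insert_self a s)
          (by rintro rfl; exact hx hb))
      · exact h

variable {n : ℕ}

noncomputable def Vp (n : ℕ) : MvPolynomial (Fin n) ℤ :=
  ∏ i : Fin n, ∏ j ∈ Ioi i, (X j - X i)

noncomputable def Dm (b : Fin n → ℕ) : MvPolynomial (Fin n) ℤ :=
  Matrix.det (Matrix.of fun i j : Fin n => (X i : MvPolynomial (Fin n) ℤ) ^ (b j))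

lemma not_dvd_X_sub_X {i j k l : Fin n} (hij : i < j) (hkl : k < l)
    (hne : (i, j) ≠ (k, l)) :
    ¬ (X j - X i : MvPolynomial (Fin n) ℤ) ∣ (X l - X k) := by
  intro hdvd
  by_cases hk : k = i ∨ k = j
  · by_cases hl : l = i ∨ l = j
    · rcases hk with rfl | rfl
      · rcases hl with rfl | rfl
        · exact absurd rfl hkl.ne
        · exact hne rfl
      · rcases hl with rfl | rfl
        · exact absurd (hkl.trans hij) (lt_irrefl _)
        · exact absurd rfl hkl.ne
    · push_neg at hl
      have := map_dvd (MvPolynomial.eval (fun m => if m = l then (1:ℤ) else 0)) hdvd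
      simp [Ne.symm hl.1, Ne.symm hl.2, hkl.ne] at this
  · push_neg at hk
    have := map_dvd (MvPolynomial.eval (fun m => if m = k then (1:ℤ) else 0)) hdvd
    simp [Ne.symm hk.1, Ne.symm hk.2, hkl.ne'] at this

lemma vand_dvd_det (b : Fin n → ℕ) : Vp n ∣ Dm b := by
  classical
  rw [Vp, ← Finset.prod_sigma (Finset.univ) (fun i => Ioi i)
    (fun q => (X q.2 - X q.1 : MvPolynomial (Fin n) ℤ))]
  refine prod_dvd_of_primes _ _ _ ?_ ?_ ?_
  · rintro ⟨i, j⟩ hij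
    simp only [mem_sigma, mem_univ, mem_Ioi, true_and] at hij
    exact prime_X_sub_X j i hij.ne'
  · rintro ⟨i, j⟩ hij ⟨k, l⟩ hkl hne
    simp only [mem_sigma, mem_univ, mem_Ioi, true_and] at hij hkl
    refine not_dvd_X_sub_X hij hkl ?_
    intro h
    apply hne
    obtain ⟨h1, h2⟩ := Prod.mk.injEq .. ▸ h
    subst h1; subst h2; rfl
  · rintro ⟨i, j⟩ hij
    simp only [mem_sigma, mem_univ, mem_Ioi, true_and] at hij
    have : (X i - X j : MvPolynomial (Fin n) ℤ) ∣ Dm b := by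
      apply dvd_of_subXX_eq_zero
      unfold Dm
      rw [RingHom.map_det]
      apply Matrix.det_zero_of_row_eq hij.ne
      funext c
      simp [RingHom.mapMatrix_apply, Matrix.map_apply]
    have hneg : (X j - X i : MvPolynomial (Fin n) ℤ) = -(X i - X j) := by ring
    rw [hneg]
    exact (neg_dvd).2 this



noncomputable def haux (a b : ℕ) : Polynomial ℤ :=
  Polynomial.X ^ a * (∑ r ∈ range (b - a), Polynomial.X ^ r)
    - Polynomial.X ^ b * (∑ r ∈ range (a - b), Polynomial.X ^ r)

lemma haux_mul (a b : ℕ) :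
    ((Polynomial.X : Polynomial ℤ) - 1) * haux a b
      = (Polynomial.X : Polynomial ℤ) ^ b - (Polynomial.X : Polynomial ℤ) ^ a := by
  have key : ∀ c m : ℕ, ((Polynomial.X : Polynomial ℤ) - 1)
        * ((Polynomial.X : Polynomial ℤ) ^ c * (∑ r ∈ range m, (Polynomial.X : Polynomial ℤ) ^ r))
      = (Polynomial.X : Polynomial ℤ) ^ (m + c) - (Polynomial.X : Polynomial ℤ) ^ c := by
    intro c m
    have h := geom_sum_mul (Polynomial.X : Polynomial ℤ) m
    have e : ((Polynomial.X : Polynomial ℤ) - 1)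
          * ((Polynomial.X : Polynomial ℤ) ^ c * ∑ r ∈ range m, (Polynomial.X : Polynomial ℤ) ^ r)
        = (Polynomial.X : Polynomial ℤ) ^ c
          * ((∑ r ∈ range m, (Polynomial.X : Polynomial ℤ) ^ r)
            * ((Polynomial.X : Polynomial ℤ) - 1)) := by ring
    rw [e, h, pow_add]; ring
  rw [haux, mul_sub, key, key]
  have h1 : b - a + a = max b a := by omega
  have h2 : a - b + b = max b a := by omega
  rw [h1, h2]
  ring

lemma haux_eval_one (a b : ℕ) : (haux a b).eval 1 = (b : ℤ) - (a : ℤ) := by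
  simp [haux, Polynomial.eval_finset_sum]
  omega

/-- number of ordered pairs i < j in Fin n -/
def Lnum (n : ℕ) : ℕ := ∑ i : Fin n, (Ioi i).card

lemma prod_factor (c : Fin n → ℕ) :
    (∏ i : Fin n, ∏ j ∈ Ioi i, ((Polynomial.X : Polynomial ℤ) ^ (c j) - Polynomial.X ^ (c i)))
      = (Polynomial.X - 1) ^ Lnum n * ∏ i : Fin n, ∏ j ∈ Ioi i, haux (c i) (c j) := by
  have : ∀ i : Fin n, ∀ j ∈ Ioi i,
      ((Polynomial.X : Polynomial ℤ) ^ (c j) - Polynomial.X ^ (c i))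
        = (Polynomial.X - 1) * haux (c i) (c j) := fun i j _ => (haux_mul (c i) (c j)).symm
  rw [Finset.prod_congr rfl (fun i _ => Finset.prod_congr rfl (this i))]
  rw [Finset.prod_congr rfl (fun i (_ : i ∈ univ) => Finset.prod_mul_distrib)]
  rw [Finset.prod_mul_distrib]
  congr 1
  rw [Lnum, ← Finset.prod_pow_eq_pow_sum]
  exact Finset.prod_congr rfl (fun i _ => by rw [Finset.prod_const])

noncomputable def psi (a : Fin n → ℕ) : MvPolynomial (Fin n) ℤ →+* Polynomial ℤ :=
  (MvPolynomial.aeval (fun i => (Polynomial.X : Polynomial ℤ) ^ (a i))).toRingHom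

lemma psi_Dm (a b : Fin n → ℕ) :
    psi a (Dm b) = Matrix.det (Matrix.of fun i j : Fin n =>
      (Polynomial.X : Polynomial ℤ) ^ (a i * b j)) := by
  unfold Dm
  rw [RingHom.map_det]
  congr 1
  funext i j
  simp [psi, RingHom.mapMatrix_apply, Matrix.map_apply, ← pow_mul]

lemma psi_Vp (a : Fin n → ℕ) :
    psi a (Vp n) = ∏ i : Fin n, ∏ j ∈ Ioi i,
      ((Polynomial.X : Polynomial ℤ) ^ (a j) - Polynomial.X ^ (a i)) := by
  unfold Vp
  rw [map_prod]
  refine Finset.prod_congr rfl fun i _ => ?_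
  rw [map_prod]
  refine Finset.prod_congr rfl fun j _ => ?_
  simp [psi]

lemma psi_val_Dm (b : Fin n → ℕ) :
    psi (fun i : Fin n => (i : ℕ)) (Dm b)
      = ∏ i : Fin n, ∏ j ∈ Ioi i,
        ((Polynomial.X : Polynomial ℤ) ^ (b j) - Polynomial.X ^ (b i)) := by
  rw [psi_Dm]
  have : (Matrix.of fun i j : Fin n => (Polynomial.X : Polynomial ℤ) ^ ((i : ℕ) * b j))
      = Matrix.transpose
        (Matrix.vandermonde (fun j : Fin n => (Polynomial.X : Polynomial ℤ) ^ (b j))) := by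
    funext i j
    simp only [Matrix.of_apply, Matrix.transpose_apply, Matrix.vandermonde_apply, ← pow_mul]
    rw [mul_comm]
  rw [this, Matrix.det_transpose, Matrix.det_vandermonde]



lemma eval_one_psi (a : Fin n → ℕ) (Q : MvPolynomial (Fin n) ℤ) :
    Polynomial.eval 1 (psi a Q) = MvPolynomial.eval (fun _ => (1:ℤ)) Q := by
  have h : (Polynomial.evalRingHom (1:ℤ)).comp (psi a)
      = (MvPolynomial.eval (fun _ => (1:ℤ)) : MvPolynomial (Fin n) ℤ →+* ℤ) := by
    apply MvPolynomial.ringHom_ext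
    · intro r
      simp [psi]
    · intro i
      simp [psi]
  exact RingHom.congr_fun h Q

lemma eval_one_Q_dvd (b : Fin n → ℕ) (Q : MvPolynomial (Fin n) ℤ)
    (hQ : Dm b = Vp n * Q) :
    (MvPolynomial.eval (fun _ : Fin n => (1:ℤ)) Q)
      ∣ ∏ i : Fin n, ∏ j ∈ Ioi i, ((b j : ℤ) - (b i : ℤ)) := by
  have happ := congrArg (psi (fun i : Fin n => (i : ℕ))) hQ
  rw [map_mul, psi_val_Dm, psi_Vp] at happ
  rw [prod_factor b, prod_factor (fun i : Fin n => (i : ℕ))] at happ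
  rw [mul_assoc] at happ
  have hx1 : ((Polynomial.X : Polynomial ℤ) - 1) ^ Lnum n ≠ 0 := by
    apply pow_ne_zero
    have := Polynomial.X_sub_C_ne_zero (R := ℤ)
    simpa using Polynomial.X_sub_C_ne_zero (1 : ℤ)
  have hcan := mul_left_cancel₀ hx1 happ
  have heval := congrArg (Polynomial.eval (1:ℤ)) hcan
  rw [Polynomial.eval_mul, eval_one_psi] at heval
  have hb : Polynomial.eval 1 (∏ i : Fin n, ∏ j ∈ Ioi i, haux (b i) (b j))
      = ∏ i : Fin n, ∏ j ∈ Ioi i, ((b j : ℤ) - (b i : ℤ)) := by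
    rw [Polynomial.eval_prod]
    refine Finset.prod_congr rfl fun i _ => ?_
    rw [Polynomial.eval_prod]
    exact Finset.prod_congr rfl fun j _ => haux_eval_one _ _
  rw [hb] at heval
  rw [heval]
  exact Dvd.intro_left _ rfl

theorem chebotarev {p : ℕ} (hp : p.Prime) {ζ : ℂ} (hζ : IsPrimitiveRoot ζ p)
    {n : ℕ} (a b : Fin n → ℕ) (ha : Function.Injective a) (hb : Function.Injective b)
    (ha' : ∀ i, a i < p) (hb' : ∀ i, b i < p) :
    Matrix.det (Matrix.of fun i j : Fin n => ζ ^ (a i * b j)) ≠ 0 := by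
  intro h0
  obtain ⟨Q, hQ⟩ := vand_dvd_det b
  -- evaluate the identity at z_i = ζ ^ a i
  set Θ : MvPolynomial (Fin n) ℤ →+* ℂ :=
    (MvPolynomial.aeval (fun i : Fin n => ζ ^ a i)).toRingHom with hΘ
  have hΘD : Θ (Dm b) = 0 := by
    unfold Dm
    rw [RingHom.map_det]
    rw [← h0]
    congr 1
    funext i j
    simp [hΘ, RingHom.mapMatrix_apply, Matrix.map_apply, ← pow_mul]
  have hΘV : Θ (Vp n) ≠ 0 := by
    unfold Vp
    rw [map_prod]
    apply Finset.prod_ne_zero_iff.2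
    intro i _
    rw [map_prod]
    apply Finset.prod_ne_zero_iff.2
    intro j hj
    simp only [hΘ, map_sub, AlgHom.toRingHom_eq_coe, RingHom.coe_coe, MvPolynomial.aeval_X]
    rw [sub_ne_zero]
    intro hEq
    exact (mem_Ioi.1 hj).ne' (ha (hζ.pow_inj (ha' j) (ha' i) hEq))
  have hΘQ : Θ Q = 0 := by
    have := hQ ▸ hΘD
    rw [map_mul] at this
    rcases mul_eq_zero.1 this with h | h
    · exact absurd h hΘV
    · exact h
  -- hence aeval ζ (psi a Q) = 0, so cyclotomic p ∣ psi a Q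
  have hcomp : (Polynomial.aeval ζ : Polynomial ℤ →ₐ[ℤ] ℂ).toRingHom.comp (psi a) = Θ := by
    apply MvPolynomial.ringHom_ext
    · intro r; simp [psi, hΘ]
    · intro i; simp [psi, hΘ]
  have haeval : Polynomial.aeval ζ (psi a Q) = 0 := by
    have h2 := RingHom.congr_fun hcomp Q
    simp only [RingHom.coe_comp, Function.comp_apply, AlgHom.toRingHom_eq_coe,
      RingHom.coe_coe] at h2
    rw [h2, hΘQ]
  have hpos : 0 < p := hp.pos
  have hint : IsIntegral ℤ ζ := hζ.isIntegral hpos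
  have hmin : Polynomial.cyclotomic p ℤ = minpoly ℤ ζ :=
    Polynomial.cyclotomic_eq_minpoly hζ hpos
  have hdvd : Polynomial.cyclotomic p ℤ ∣ psi a Q := by
    rw [hmin]
    exact minpoly.isIntegrallyClosed_dvd hint haeval
  have hpdvd : (p : ℤ) ∣ MvPolynomial.eval (fun _ : Fin n => (1:ℤ)) Q := by
    have : Fact p.Prime := ⟨hp⟩
    have := map_dvd (Polynomial.evalRingHom (1:ℤ)) hdvd
    rwa [Polynomial.coe_evalRingHom, Polynomial.eval_one_cyclotomic_prime, eval_one_psi] at this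
  have hfinal : (p : ℤ) ∣ ∏ i : Fin n, ∏ j ∈ Ioi i, ((b j : ℤ) - (b i : ℤ)) :=
    hpdvd.trans (eval_one_Q_dvd b Q hQ)
  have hprime : Prime (p : ℤ) := Nat.prime_iff_prime_int.mp hp
  rw [Prime.dvd_finset_prod_iff hprime] at hfinal
  obtain ⟨i, _, hi⟩ := hfinal
  rw [Prime.dvd_finset_prod_iff hprime] at hi
  obtain ⟨j, hj, hij⟩ := hi
  have hne : (b j : ℤ) - (b i : ℤ) ≠ 0 := by
    have := hb.ne (mem_Ioi.1 hj).ne'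
    intro h
    apply this
    have : (b j : ℤ) = b i := by linarith [sub_eq_zero.1 h]
    exact_mod_cast this
  have habs : |(b j : ℤ) - (b i : ℤ)| < p := by
    have := hb' i; have := hb' j
    rw [abs_lt]
    constructor <;> [linarith [Int.ofNat_lt.2 (hb' i)]; linarith [Int.ofNat_lt.2 (hb' j)]]
  exact hne (Int.eq_zero_of_abs_lt_dvd hij habs)

end TaoUP


namespace TaoUP

lemma chi_eq_pow (d : ℕ) [NeZero d] (a : ZMod d) :
    chi d a = (Complex.exp (-(2 * (Real.pi : ℂ) * Complex.I) / d)) ^ a.val := by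
  rw [chi, ← Complex.exp_nat_mul]
  congr 1
  ring

lemma zeta_prim (d : ℕ) [NeZero d] :
    IsPrimitiveRoot (Complex.exp (-(2 * (Real.pi : ℂ) * Complex.I) / d)) d := by
  have h := Complex.isPrimitiveRoot_exp d (NeZero.ne d)
  have : Complex.exp (-(2 * (Real.pi : ℂ) * Complex.I) / d)
      = (Complex.exp (2 * (Real.pi : ℂ) * Complex.I / d))⁻¹ := by
    rw [← Complex.exp_neg]
    congr 1
    ring
  rw [this]
  exact h.inv

end TaoUP

namespace TaoUP

lemma pow_val_mul (d : ℕ) [NeZero d] {ζ : ℂ} (hζ : IsPrimitiveRoot ζ d) (u v : ZMod d) :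
    ζ ^ (u * v).val = ζ ^ (u.val * v.val) := by
  rw [ZMod.val_mul]
  conv_rhs => rw [← Nat.mod_add_div (u.val * v.val) d]
  rw [pow_add, pow_mul, hζ.pow_eq_one, one_pow, mul_one]

end TaoUP

theorem stmt6 (d : ℕ) [NeZero d] (hd : d.Prime) (f : ZMod d → ℂ) (hf : f ≠ 0) :
    d + 1 ≤ {j : ZMod d | f j ≠ 0}.ncard + {l : ZMod d | dft d f l ≠ 0}.ncard := by
  classical
  by_contra hcon
  push_neg at hcon
  set ζ := Complex.exp (-(2 * (Real.pi : ℂ) * Complex.I) / d) with hζdef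
  have hζ : IsPrimitiveRoot ζ d := TaoUP.zeta_prim d
  set S : Finset (ZMod d) := Finset.univ.filter (fun j => f j ≠ 0) with hS
  set T : Finset (ZMod d) := Finset.univ.filter (fun l => dft d f l ≠ 0) with hT
  have hSn : {j : ZMod d | f j ≠ 0}.ncard = S.card := by
    rw [← Set.ncard_coe_finset]
    congr 1
    ext j
    simp [hS]
  have hTn : {l : ZMod d | dft d f l ≠ 0}.ncard = T.card := by
    rw [← Set.ncard_coe_finset]
    congr 1
    ext l
    simp [hT]
  rw [hSn, hTn] at hcon
  set n := S.card with hn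
  have hn1 : 0 < n := by
    obtain ⟨j, hj⟩ := Function.ne_iff.1 hf
    exact Finset.card_pos.2 ⟨j, by simp only [hS, Finset.mem_filter, Finset.mem_univ, true_and]; simpa using hj⟩
  set Z : Finset (ZMod d) := Finset.univ.filter (fun l => dft d f l = 0) with hZ
  have hZcard : n ≤ Z.card := by
    have h1 : T.card + Z.card = d := by
      have := Finset.card_filter_add_card_filter_not
        (s := (Finset.univ : Finset (ZMod d))) (p := fun l => dft d f l ≠ 0)
      simp only [Finset.card_univ, ZMod.card] at this
      simp only [ne_eq, not_not] at this
      rw [hT, hZ]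
      exact this
    omega
  obtain ⟨B, hBZ, hBcard⟩ := Finset.exists_subset_card_eq hZcard
  let eS := S.equivFinOfCardEq rfl
  let x : Fin n → ZMod d := fun i => (eS.symm i : ZMod d)
  have hxinj : Function.Injective x := fun i j h =>
    eS.symm.injective (Subtype.coe_injective h)
  have hxS : ∀ i, x i ∈ S := fun i => (eS.symm i).2
  have hSim : S = Finset.image x Finset.univ := by
    apply (Finset.eq_of_subset_of_card_le ?_ ?_).symm
    · intro a ha
      obtain ⟨i, _, rfl⟩ := Finset.mem_image.1 ha
      exact hxS i
    · rw [Finset.card_image_of_injective _ hxinj, Finset.card_univ, Fintype.card_fin]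
  let eB := B.equivFinOfCardEq hBcard
  let k : Fin n → ZMod d := fun j => (eB.symm j : ZMod d)
  have hkinj : Function.Injective k := fun i j h =>
    eB.symm.injective (Subtype.coe_injective h)
  have hkB : ∀ j, k j ∈ B := fun j => (eB.symm j).2
  -- the matrix
  let M : Matrix (Fin n) (Fin n) ℂ :=
    Matrix.of fun j i => ζ ^ ((k j).val * (x i).val)
  have hdet : M.det ≠ 0 :=
    TaoUP.chebotarev hd hζ _ _ ((ZMod.val_injective d).comp hkinj)
      ((ZMod.val_injective d).comp hxinj) (fun j => ZMod.val_lt _) (fun i => ZMod.val_lt _)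
  let v : Fin n → ℂ := fun i => f (x i)
  have hmv : M.mulVec v = 0 := by
    funext j
    have hkZ : dft d f (k j) = 0 := by
      have := hBZ (hkB j)
      simpa [hZ] using this
    have hsum : dft d f (k j) = ∑ i : Fin n, M j i * v i := by
      rw [dft]
      rw [← Finset.sum_subset (Finset.subset_univ S)
        (fun l _ hl => by simp [hS] at hl; simp [hl])]
      rw [hSim, Finset.sum_image (fun a _ b _ h => hxinj h)]
      refine Finset.sum_congr rfl fun i _ => ?_
      rw [TaoUP.chi_eq_pow, ← hζdef, TaoUP.pow_val_mul d hζ]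
      simp only [M, Matrix.of_apply, v]
      rw [mul_comm, mul_comm ((x i).val) ((k j).val)]
    simp only [Pi.zero_apply]
    rw [show M.mulVec v j = ∑ i : Fin n, M j i * v i from rfl, ← hsum, hkZ]
  have hv0 : v = 0 := Matrix.eq_zero_of_mulVec_eq_zero hdet hmv
  have := hxS ⟨0, hn1⟩
  simp only [hS, Finset.mem_filter] at this
  exact this.2 (by simpa [v] using congrFun hv0 ⟨0, hn1⟩)
end

section
/- Let V ⊆ {0,...,m} ⊆ Z be a finite set of nonnegative integers with max(V) ≤ m < d/2, and define g in C^d by g_j = 2^j for j in V (as integers in {0,...,d-1}) and g_j = 0 otherwise. Then for every k in {0,...,m} such that there exists j with j, j-k both in V, and every l in Z_d, V_g g(k,l) ≠ 0. -/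
open Complex Finset

lemma abs_chi (d : ℕ) (a : ZMod d) : ‖chi d a‖ = 1 := by
  unfold chi
  rw [show -(2 * (Real.pi : ℂ) * Complex.I * (a.val : ℂ)) / (d : ℂ)
      = ((-(2 * Real.pi * (a.val : ℝ)) / (d : ℝ) : ℝ) : ℂ) * Complex.I by push_cast; ring]
  exact Complex.norm_exp_ofReal_mul_I _

theorem stmt9 (d m : ℕ) [NeZero d] (hd : 2 ≤ d) (hm : 2 * m < d)
    (V : Finset ℕ) (hV : V ⊆ Finset.range (m + 1))
    (g : ZMod d → ℂ) (hg : ∀ j : ZMod d, g j = if j.val ∈ V then (2 : ℂ) ^ j.val else 0)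
    (k : ℕ) (hk : k ≤ m) (hkV : ∃ j ∈ V, k ≤ j ∧ j - k ∈ V) :
    ∀ l : ZMod d, stft d g g (k : ZMod d) l ≠ 0 := by
  intro l
  have hmd : m < d := by omega
  set S : Finset ℕ := V.filter (fun j => k ≤ j ∧ j - k ∈ V) with hSdef
  obtain ⟨j0, hj0V, hj0k, hj0kV⟩ := hkV
  have hSne : S.Nonempty := ⟨j0, by simp [hSdef, hj0V, hj0k, hj0kV]⟩
  have hSm : ∀ j ∈ S, j ≤ m := by
    intro j hj
    have := hV (Finset.mem_filter.mp hj).1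
    simpa [Nat.lt_succ_iff] using Finset.mem_range.mp this
  set c : ℕ → ℂ := fun n => ((2:ℂ)^n * (2:ℂ)^(n-k)) * chi d ((n : ZMod d) * l) with hcdef
  set t : ZMod d → ℂ := fun j => g j * (starRingEnd ℂ) (g (j - (k : ZMod d))) * chi d (j * l)
    with htdef
  -- members of S have val n
  have hvaln : ∀ n ∈ S, ((n : ZMod d)).val = n := fun n hn =>
    ZMod.val_natCast_of_lt (by have := hSm n hn; omega)
  -- t vanishes off S
  have hvanish : ∀ j : ZMod d, j.val ∉ S → t j = 0 := by
    intro j hj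
    by_cases h1 : j.val ∈ V
    · by_cases h2 : (j - (k : ZMod d)).val ∈ V
      · exfalso
        set v := (j - (k : ZMod d)).val with hv
        have hvm : v ≤ m := by
          have := hV h2; simpa [Nat.lt_succ_iff] using Finset.mem_range.mp this
        have hjeq : j = ((v + k : ℕ) : ZMod d) := by
          push_cast
          rw [ZMod.natCast_val, ZMod.cast_id]
          ring
        have hjval : j.val = v + k := by
          rw [hjeq]; exact ZMod.val_natCast_of_lt (by omega)
        apply hj
        rw [hSdef, Finset.mem_filter]
        refine ⟨by rwa [hjval] at h1 ⊢, by omega, ?_⟩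
        rw [hjval]; simpa using h2
      · simp [htdef, hg, h2]
    · simp [htdef, hg, h1]
  -- rewrite the sum
  have key : stft d g g (k : ZMod d) l = ∑ n ∈ S, c n := by
    show (∑ j : ZMod d, t j) = _
    rw [← Finset.sum_filter_of_ne (s := Finset.univ) (p := fun j => j.val ∈ S)
      (by intro j _ h; by_contra hc; exact h (hvanish j hc))]
    refine Finset.sum_nbij' (fun j => j.val) (fun n => (n : ZMod d)) ?_ ?_ ?_ ?_ ?_
    · intro a ha; exact (Finset.mem_filter.mp ha).2
    · intro n hn; simp [hvaln n hn, hn]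
    · intro a _; simp [ZMod.natCast_val, ZMod.cast_id]
    · intro n hn; exact hvaln n hn
    · intro a ha
      have hva : a.val ∈ S := (Finset.mem_filter.mp ha).2
      obtain ⟨h1, h2, h3⟩ := Finset.mem_filter.mp hva
      have hadd : ((a.val - k : ℕ) : ZMod d) + (k : ZMod d) = a := by
        rw [← Nat.cast_add, Nat.sub_add_cancel h2, ZMod.natCast_val, ZMod.cast_id]
      have hsub : a - (k : ZMod d) = ((a.val - k : ℕ) : ZMod d) := by
        rw [sub_eq_iff_eq_add]; exact hadd.symm
      have hvsub : (a - (k : ZMod d)).val = a.val - k := by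
        rw [hsub]; exact ZMod.val_natCast_of_lt (by have := hSm _ hva; omega)
      have hc2 : (starRingEnd ℂ) (2:ℂ) = 2 := Complex.conj_ofNat 2
      simp only [htdef, hcdef, hg, hvsub, h3, if_true, h1, map_pow, hc2,
        ZMod.natCast_val, ZMod.cast_id]
  rw [key]
  -- the estimate
  set J := S.max' hSne with hJ
  have hJS : J ∈ S := S.max'_mem hSne
  have hkJ : k ≤ J := (Finset.mem_filter.mp hJS).2.1
  have habs : ∀ n ∈ S, ‖c n‖ = (4:ℝ)^n / 2^k := by
    intro n hn
    have hkn : k ≤ n := (Finset.mem_filter.mp hn).2.1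
    simp only [hcdef, norm_mul, abs_chi, mul_one, norm_pow]
    rw [Complex.norm_two]
    rw [pow_sub₀ (2:ℝ) two_ne_zero hkn]
    rw [show (4:ℝ) = 2*2 by norm_num, mul_pow]
    ring
  intro hzero
  have hsplit : c J = -∑ n ∈ S.erase J, c n := by
    have := Finset.add_sum_erase S c hJS
    rw [hzero] at this
    linear_combination this
  have habsJ := habs J hJS
  have h1 : ‖c J‖ ≤ ∑ n ∈ S.erase J, ‖c n‖ := by
    rw [hsplit, norm_neg]
    exact norm_sum_le _ _
  have h2 : ∑ n ∈ S.erase J, ‖c n‖ ≤ ((4:ℝ)^J - 1)/3 / 2^k := by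
    rw [Finset.sum_congr rfl (fun n hn => habs n (Finset.mem_of_mem_erase hn))]
    have hssub : S.erase J ⊆ Finset.range J := by
      intro n hn
      have h1' := Finset.mem_of_mem_erase hn
      have h2' := S.le_max' n h1'
      have h3' := Finset.ne_of_mem_erase hn
      exact Finset.mem_range.mpr (by omega)
    calc ∑ n ∈ S.erase J, (4:ℝ)^n/2^k
        ≤ ∑ n ∈ Finset.range J, (4:ℝ)^n/2^k :=
          Finset.sum_le_sum_of_subset_of_nonneg hssub (fun _ _ _ => by positivity)
      _ = (∑ n ∈ Finset.range J, (4:ℝ)^n)/2^k := by rw [Finset.sum_div]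
      _ = ((4:ℝ)^J - 1)/3/2^k := by rw [geom_sum_eq (by norm_num)]; norm_num
  rw [habsJ] at h1
  have hle : (4:ℝ)^J/2^k ≤ ((4:ℝ)^J - 1)/3/2^k := le_trans h1 h2
  have hpos : (0:ℝ) < 2^k := by positivity
  have hle2 : (4:ℝ)^J ≤ ((4:ℝ)^J - 1)/3 := (div_le_div_iff_of_pos_right hpos).mp hle
  have h4 : (1:ℝ) ≤ (4:ℝ)^J := one_le_pow₀ (by norm_num)
  linarith
end

section
/- Let p ≥ 3, d = 2p+1, and define g in C^d (real-valued) by: g_1 = -1/(2cos(2p²π/d)), g_{p+1} = -2cos(2p²π/d), g_j = 0 for p+2 ≤ j ≤ d-1, g_{p-1} = c for a parameter c in R, and g_j = 1 for all other j in {0,...,p}. Then for every l in Z_d, V_g g(p,l) = 2cos(2lpπ/d) - 2cos(2p²π/d), and V_g g(p,l) = 0 if and only if l ∈ {p, p+1}. -/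
open Complex Finset

lemma chi_eq_exp (d : ℕ) [NeZero d] (a : ZMod d) (n : ℤ) (hn : (n : ZMod d) = a) :
    chi d a = Complex.exp (-(2 * (Real.pi : ℂ) * Complex.I * (n : ℂ)) / (d : ℂ)) := by
  have hd : (d:ℂ) ≠ 0 := Nat.cast_ne_zero.mpr (NeZero.ne d)
  have h : (d:ℤ) ∣ n - (a.val : ℤ) := by
    apply (ZMod.intCast_zmod_eq_zero_iff_dvd _ _).mp
    push_cast
    rw [hn, ZMod.natCast_rightInverse a, sub_self]
  obtain ⟨m, hm⟩ := h
  have hn' : (n:ℂ) = (a.val : ℂ) + (d:ℂ) * (m:ℂ) := by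
    have h2 : n = (a.val : ℤ) + d * m := by linarith
    exact_mod_cast congrArg (Int.cast : ℤ → ℂ) h2
  rw [chi, hn', show -(2 * (Real.pi : ℂ) * Complex.I * ((a.val:ℂ) + (d:ℂ)*(m:ℂ))) / (d:ℂ)
      = -(2 * (Real.pi : ℂ) * Complex.I * (a.val:ℂ)) / (d:ℂ) + (-m : ℤ) * (2*(Real.pi:ℂ)*Complex.I) by push_cast; field_simp; ring]
  rw [Complex.exp_add, Complex.exp_int_mul_two_pi_mul_I, mul_one]

lemma chi_add_chi_neg (d : ℕ) [NeZero d] (a : ZMod d) (n : ℕ) (hn : ((n:ℕ) : ZMod d) = a) :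
    chi d a + chi d (-a) = ((2 * Real.cos (2 * Real.pi * n / d) : ℝ) : ℂ) := by
  have hd : (d:ℂ) ≠ 0 := Nat.cast_ne_zero.mpr (NeZero.ne d)
  have h1 : chi d a = Complex.exp (((-(2 * Real.pi * n / d) : ℝ) : ℂ) * Complex.I) := by
    rw [chi_eq_exp d a n (by exact_mod_cast hn)]
    congr 1
    push_cast
    ring
  have h2 : chi d (-a) = Complex.exp (((2 * Real.pi * n / d : ℝ) : ℂ) * Complex.I) := by
    rw [chi_eq_exp d (-a) (-n) (by push_cast [hn]; ring)]
    congr 1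
    push_cast
    ring
  rw [h1, h2, Complex.exp_mul_I, Complex.exp_mul_I]
  push_cast
  simp [Real.cos_neg, Real.sin_neg]
  ring

theorem stmt13 (p d : ℕ) [NeZero d] (hp : 3 ≤ p) (hd : d = 2 * p + 1)
    (c : ℝ) (g : ZMod d → ℂ)
    (hg : ∀ j : ZMod d, g j =
      if j.val = 1 then ((-(1 / (2 * Real.cos (2 * (p : ℝ)^2 * Real.pi / d))) : ℝ) : ℂ)
      else if j.val = p + 1 then ((-(2 * Real.cos (2 * (p : ℝ)^2 * Real.pi / d)) : ℝ) : ℂ)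
      else if p + 2 ≤ j.val then 0
      else if j.val = p - 1 then ((c : ℝ) : ℂ)
      else 1) :
    ∀ l : ZMod d,
      stft d g g (p : ZMod d) l =
        ((2 * Real.cos (2 * (l.val : ℝ) * p * Real.pi / d)
          - 2 * Real.cos (2 * (p : ℝ)^2 * Real.pi / d) : ℝ) : ℂ) ∧
      (stft d g g (p : ZMod d) l = 0 ↔ l = (p : ZMod d) ∨ l = ((p + 1 : ℕ) : ZMod d)) := by
  intro l
  have hdR : (d:ℝ) ≠ 0 := Nat.cast_ne_zero.mpr (NeZero.ne d)
  have hπ : Real.pi ≠ 0 := Real.pi_ne_zero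
  set θ : ℝ := 2 * (p : ℝ)^2 * Real.pi / d with hθdef
  -- cos θ ≠ 0
  have hcos : Real.cos θ ≠ 0 := by
    intro h
    obtain ⟨k, hk⟩ := Real.cos_eq_zero_iff.mp h
    have h2 : (4 * p^2 : ℝ) = (2*k+1) * d := by
      have := hk
      rw [hθdef] at this
      field_simp at this
      have h2' : (4 * p^2 : ℝ) * Real.pi = ((2*(k:ℝ)+1) * d) * Real.pi := by linear_combination Real.pi * this
      have := mul_right_cancel₀ hπ h2'
      linarith
    have h3 : (4 * p^2 : ℤ) = (2*k+1) * d := by exact_mod_cast h2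
    have hodd : Odd ((2*k+1) * (d:ℤ)) := by
      refine (odd_two_mul_add_one k).mul ?_
      rw [hd]; push_cast; exact ⟨p, by ring⟩
    rw [← h3] at hodd
    exact (Int.not_odd_iff_even.mpr ⟨2*p^2, by ring⟩) hodd
  -- val facts
  have hval : ∀ v : ℕ, v < d → ((v : ZMod d)).val = v := fun v hv => ZMod.val_cast_of_lt hv
  have hpd : p < d := by omega
  have hp1d : p + 1 < d := by omega
  -- g values
  have hg0 : g (0 : ZMod d) = 1 := by
    rw [hg 0, ZMod.val_zero]
    have : ¬ (0 = p - 1) := by omega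
    simp only [if_neg (by omega : ¬ (0:ℕ) = 1), if_neg (by omega : ¬ (0:ℕ) = p+1),
      if_neg (by omega : ¬ p + 2 ≤ 0), if_neg this]
  have hg1 : g ((1:ℕ) : ZMod d) = ((-(1 / (2 * Real.cos θ)) : ℝ) : ℂ) := by
    rw [hg _, hval 1 (by omega)]
    simp
  have hgp : g ((p:ℕ) : ZMod d) = 1 := by
    rw [hg _, hval p hpd]
    simp only [if_neg (by omega : ¬ p = 1), if_neg (by omega : ¬ p = p+1),
      if_neg (by omega : ¬ p + 2 ≤ p), if_neg (by omega : ¬ p = p - 1)]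
  have hgp1 : g ((p+1:ℕ) : ZMod d) = ((-(2 * Real.cos θ) : ℝ) : ℂ) := by
    rw [hg _, hval (p+1) hp1d]
    simp only [if_neg (by omega : ¬ p + 1 = 1), if_pos rfl]
    simp
  -- zero terms
  have hzero : ∀ j : ZMod d, j.val ≠ 0 → j.val ≠ p → j.val ≠ p + 1 →
      g j * (starRingEnd ℂ) (g (j - (p : ZMod d))) = 0 := by
    intro j h0 hjp hjp1
    by_cases hbig : p + 2 ≤ j.val
    · have : g j = 0 := by
        rw [hg j]
        simp only [if_neg (by omega : ¬ j.val = 1), if_neg (by omega : ¬ j.val = p+1), if_pos hbig]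
      rw [this, zero_mul]
    · -- 1 ≤ j.val ≤ p - 1, so j.val < p
      have hjd : j.val < d := ZMod.val_lt j
      have hvp : j.val < p := by omega
      have hsub : j - (p : ZMod d) = ((j.val + p + 1 : ℕ) : ZMod d) := by
        have hj : ((j.val : ℕ) : ZMod d) = j := ZMod.natCast_rightInverse j
        have h20 : ((2*p+1 : ℕ) : ZMod d) = 0 := by
          rw [← congrArg (fun n : ℕ => (n : ZMod d)) hd]; exact ZMod.natCast_self d
        push_cast at h20 ⊢
        rw [hj]
        linear_combination (-1 : ZMod d) * h20
      have hval2 : ((j.val + p + 1 : ℕ) : ZMod d).val = j.val + p + 1 := hval _ (by omega)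
      have : g (j - (p : ZMod d)) = 0 := by
        rw [hsub, hg _, hval2]
        simp only [if_neg (by omega : ¬ j.val + p + 1 = 1), if_neg (by omega : ¬ j.val + p + 1 = p+1),
          if_pos (by omega : p + 2 ≤ j.val + p + 1)]
      rw [this, map_zero, mul_zero]
  -- distinctness
  have hne1 : (0 : ZMod d) ≠ ((p:ℕ) : ZMod d) := by
    intro h
    have := congrArg ZMod.val h
    rw [ZMod.val_zero, hval p hpd] at this
    omega
  have hne2 : (0 : ZMod d) ≠ ((p+1:ℕ) : ZMod d) := by
    intro h
    have := congrArg ZMod.val h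
    rw [ZMod.val_zero, hval (p+1) hp1d] at this
    omega
  have hne3 : ((p:ℕ) : ZMod d) ≠ ((p+1:ℕ) : ZMod d) := by
    intro h
    have := congrArg ZMod.val h
    rw [hval p hpd, hval (p+1) hp1d] at this
    omega
  -- sum reduction
  have hS : stft d g g (p : ZMod d) l =
      ∑ j ∈ ({0, ((p:ℕ) : ZMod d), ((p+1:ℕ) : ZMod d)} : Finset (ZMod d)),
        g j * (starRingEnd ℂ) (g (j - (p : ZMod d))) * chi d (j * l) := by
    rw [stft]
    refine (Finset.sum_subset (Finset.subset_univ _) ?_).symm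
    intro j _ hj
    simp only [Finset.mem_insert, Finset.mem_singleton] at hj
    push_neg at hj
    have h0 : j.val ≠ 0 := fun h => hj.1 (by
      have : j = 0 := by
        have := ZMod.natCast_rightInverse j
        rw [h] at this
        simpa using this.symm
      exact this)
    have hjv : ((j.val : ℕ) : ZMod d) = j := ZMod.natCast_rightInverse j
    have h1 : j.val ≠ p := fun h => hj.2.1 (by rw [← hjv, h])
    have h2 : j.val ≠ p + 1 := fun h => hj.2.2 (by rw [← hjv, h])
    rw [hzero j h0 h1 h2, zero_mul]
  have h20 : ((2*p+1 : ℕ) : ZMod d) = 0 := by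
    rw [← congrArg (fun n : ℕ => (n : ZMod d)) hd]; exact ZMod.natCast_self d
  have h20' : 2 * ((p:ℕ) : ZMod d) + 1 = 0 := by push_cast at h20; exact h20
  have e1 : (0 : ZMod d) - ((p:ℕ) : ZMod d) = ((p+1:ℕ) : ZMod d) := by
    push_cast
    linear_combination (-1 : ZMod d) * h20'
  have e3 : ((p+1:ℕ) : ZMod d) - ((p:ℕ) : ZMod d) = ((1:ℕ) : ZMod d) := by push_cast; ring
  have e4 : ((p+1:ℕ) : ZMod d) = -((p:ℕ) : ZMod d) := by push_cast; linear_combination h20'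
  have hchi0 : chi d ((0 : ZMod d) * l) = 1 := by
    rw [zero_mul, chi]
    simp
  have hn : ((p * l.val : ℕ) : ZMod d) = ((p:ℕ) : ZMod d) * l := by
    push_cast
    rw [ZMod.natCast_rightInverse l]
  have hmain : stft d g g ((p:ℕ) : ZMod d) l =
      ((2 * Real.cos (2 * (l.val : ℝ) * p * Real.pi / d) - 2 * Real.cos θ : ℝ) : ℂ) := by
    rw [hS, Finset.sum_insert (by
        simp only [Finset.mem_insert, Finset.mem_singleton]
        push_neg
        exact ⟨hne1, hne2⟩),
      Finset.sum_insert (by simp only [Finset.mem_singleton]; exact hne3),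
      Finset.sum_singleton]
    rw [e1, sub_self, e3, hchi0, hg0, hgp, hgp1, hg1, Complex.conj_ofReal,
      Complex.conj_ofReal, map_one]
    rw [show (((-(2 * Real.cos θ)) : ℝ) : ℂ) * (((-(1 / (2 * Real.cos θ))) : ℝ) : ℂ) = 1 by
      rw [← Complex.ofReal_mul, show (-(2 * Real.cos θ)) * (-(1 / (2 * Real.cos θ))) = 1 by
        field_simp]
      simp]
    simp only [one_mul, mul_one]
    rw [show ((p+1:ℕ) : ZMod d) * l = -(((p:ℕ) : ZMod d) * l) by rw [e4, neg_mul]]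
    rw [chi_add_chi_neg d (((p:ℕ) : ZMod d) * l) (p * l.val) hn]
    rw [show Real.cos (2 * Real.pi * ((p * l.val : ℕ) : ℝ) / d)
        = Real.cos (2 * (l.val : ℝ) * p * Real.pi / d) by congr 1; push_cast; ring]
    push_cast
    ring
  refine ⟨hmain, ?_⟩
  rw [hmain, Complex.ofReal_eq_zero, sub_eq_zero]
  have hu : IsUnit ((p:ℕ) : ZMod d) := by
    rw [ZMod.isUnit_iff_coprime, hd, show 2*p+1 = 1 + 2*p by ring,
      Nat.coprime_add_mul_right_right]
    exact Nat.coprime_one_right p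
  constructor
  · intro h
    have hcc : Real.cos (2 * (l.val : ℝ) * p * Real.pi / d) = Real.cos θ := by linarith
    rw [Real.cos_eq_cos_iff] at hcc
    obtain ⟨k, hk | hk⟩ := hcc
    · left
      rw [hθdef] at hk
      field_simp at hk
      have hR : ((p:ℝ))^2 * (2*Real.pi) = ((k:ℝ)*d + (l.val:ℝ)*p) * (2*Real.pi) := by
        linear_combination (2*Real.pi) * hk
      have hI : (p:ℤ)^2 = k*d + (l.val:ℤ)*p := by
        have := mul_right_cancel₀ (by positivity : (2*Real.pi) ≠ 0) hR
        exact_mod_cast this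
      have h1 : (((p:ℤ)^2 : ℤ) : ZMod d) = ((k*d + (l.val:ℤ)*p : ℤ) : ZMod d) :=
        congrArg _ hI
      push_cast at h1
      rw [ZMod.natCast_rightInverse l, ZMod.natCast_self, mul_zero, zero_add] at h1
      have hz : ((p:ℕ) : ZMod d) * ((p:ℕ) : ZMod d) = l * ((p:ℕ) : ZMod d) := by
        linear_combination h1
      exact (hu.mul_right_cancel hz).symm
    · right
      rw [hθdef] at hk
      field_simp at hk
      have hR : ((p:ℝ)^2 + (l.val:ℝ)*p) * (2*Real.pi) = ((k:ℝ)*d) * (2*Real.pi) := by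
        linear_combination (2*Real.pi) * hk
      have hI : (p:ℤ)^2 + (l.val:ℤ)*p = k*d := by
        have := mul_right_cancel₀ (by positivity : (2*Real.pi) ≠ 0) hR
        exact_mod_cast this
      have h1 : (((p:ℤ)^2 + (l.val:ℤ)*p : ℤ) : ZMod d) = ((k*d : ℤ) : ZMod d) :=
        congrArg _ hI
      push_cast at h1
      rw [ZMod.natCast_rightInverse l, ZMod.natCast_self, mul_zero] at h1
      have hz : (((p:ℕ) : ZMod d) + l) * ((p:ℕ) : ZMod d) = 0 * ((p:ℕ) : ZMod d) := by
        linear_combination h1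
      have hres := hu.mul_right_cancel hz
      rw [e4]
      linear_combination hres
  · intro h
    rcases h with h | h
    · rw [h, hval p hpd]
      rw [show Real.cos (2 * (p:ℝ) * p * Real.pi / d) = Real.cos θ by
        rw [hθdef]; congr 1; ring]
    · rw [h, hval (p+1) hp1d]
      rw [show Real.cos (2 * ((p+1:ℕ):ℝ) * p * Real.pi / d) = Real.cos θ by
        rw [Real.cos_eq_cos_iff]
        refine ⟨p, Or.inr ?_⟩
        rw [hθdef, hd]
        push_cast
        field_simp
        ring]
end
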